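/- Let K be a number field of degree d over ℚ. Then every element of finite order in PGL₂(K) has order at most 2 + 4d². -/

import Mathlib

open Polynomial IntermediateField


private lemma aux_p_le {p : ℕ} (h : 3 ≤ p) : p ≤ (p - 1) ^ 2 := by
  obtain ⟨q, rfl⟩ : ∃ q, p = q + 3 := ⟨p - 3, by omega⟩
  have : (q + 3) - 1 = q + 2 := by omega
  rw [this]; nlinarith

private lemma aux_2p_le {p : ℕ} (h : 4 ≤ p) : 2 * p ≤ (p - 1) ^ 2 := by
  obtain ⟨q, rfl⟩ : ∃ q, p = q + 4 := ⟨p - 4, by omega⟩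
  have : (q + 4) - 1 = q + 3 := by omega
  rw [this]; nlinarith

private lemma pp_le {p k : ℕ} (hp : p.Prime) (hodd : p ≠ 2) (hk : k ≠ 0) :
    p ^ k ≤ (p ^ k).totient ^ 2 := by
  obtain ⟨j, rfl⟩ : ∃ j, k = j + 1 := ⟨k - 1, by omega⟩
  rw [Nat.totient_prime_pow hp (Nat.succ_pos j)]
  have hp3 : 3 ≤ p := by rcases hp.two_le.lt_or_eq with h | h <;> omega
  calc p ^ (j + 1) = p ^ j * p := by ring
    _ ≤ (p ^ j) ^ 2 * (p - 1) ^ 2 :=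
        Nat.mul_le_mul (Nat.le_self_pow two_ne_zero _) (aux_p_le hp3)
    _ = (p ^ j * (p - 1)) ^ 2 := by ring
    _ = (p ^ (j + 1 - 1) * (p - 1)) ^ 2 := by norm_num

private lemma pp_le' {p k : ℕ} (hp : p.Prime) (hodd : p ≠ 2) (hk : k ≠ 0)
    (h3 : p ^ k ≠ 3) : 2 * p ^ k ≤ (p ^ k).totient ^ 2 := by
  obtain ⟨j, rfl⟩ : ∃ j, k = j + 1 := ⟨k - 1, by omega⟩
  rw [Nat.totient_prime_pow hp (Nat.succ_pos j)]
  have hp3 : 3 ≤ p := by rcases hp.two_le.lt_or_eq with h | h <;> omega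
  rcases eq_or_lt_of_le hp3 with h3p | h4p
  · -- p = 3, so k ≥ 2, i.e. j ≥ 1
    obtain rfl : p = 3 := h3p.symm
    obtain ⟨i, rfl⟩ : ∃ i, j = i + 1 := by
      refine ⟨j - 1, ?_⟩
      rcases Nat.eq_zero_or_pos j with h | h
      · exfalso; apply h3; rw [h]; norm_num
      · omega
    have : (3:ℕ) ^ (i + 1 + 1 - 1) * (3 - 1) = 2 * 3 ^ (i+1) := by norm_num; ring
    rw [this]
    calc 2 * 3 ^ (i + 1 + 1) = (3 ^ i) * 18 := by ring
      _ ≤ (3 ^ i) ^ 2 * 36 := by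
          exact Nat.mul_le_mul (Nat.le_self_pow two_ne_zero _) (by norm_num)
      _ = (2 * 3 ^ (i+1)) ^ 2 := by ring
  · calc 2 * p ^ (j + 1) = p ^ j * (2 * p) := by ring
      _ ≤ (p ^ j) ^ 2 * (p - 1) ^ 2 :=
          Nat.mul_le_mul (Nat.le_self_pow two_ne_zero _) (aux_2p_le h4p)
      _ = (p ^ j * (p - 1)) ^ 2 := by ring
      _ = (p ^ (j + 1 - 1) * (p - 1)) ^ 2 := by norm_num

private lemma odd_totient_sq : ∀ b : ℕ, Odd b →
    b ≤ b.totient ^ 2 ∧ (b ≠ 1 → b ≠ 3 → 2 * b ≤ b.totient ^ 2) := by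
  intro b
  induction b using Nat.strong_induction_on with
  | _ b IH =>
  intro hodd
  have hb0 : b ≠ 0 := by rintro rfl; simp [Nat.odd_iff] at hodd
  rcases eq_or_ne b 1 with rfl | hb1
  · simp
  set p := b.minFac with hp_def
  have hp : p.Prime := Nat.minFac_prime hb1
  have hpdvd : p ∣ b := Nat.minFac_dvd b
  have hp2 : p ≠ 2 := by
    rintro h
    rw [h] at hpdvd
    rw [Nat.odd_iff] at hodd
    omega
  have hp3 : 3 ≤ p := by rcases hp.two_le.lt_or_eq with h | h <;> omega
  set k := b.factorization p with hk_def
  have hk : k ≠ 0 := (hp.factorization_pos_of_dvd hb0 hpdvd).ne'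
  set m := b / p ^ k with hm_def
  have hbm : p ^ k * m = b := Nat.ordProj_mul_ordCompl_eq_self b p
  have hcop : Nat.Coprime (p ^ k) m := (Nat.coprime_ordCompl hp hb0).pow_left _
  have hmdvd : m ∣ b := Nat.ordCompl_dvd b p
  have hm0 : m ≠ 0 := by intro h; rw [h, mul_zero] at hbm; exact hb0 hbm.symm
  have hmodd : Odd m := by
    rcases Nat.even_or_odd m with h | h
    · exact absurd (hbm ▸ h.mul_left (p ^ k)) (Nat.not_even_iff_odd.mpr hodd)
    · exact h
  have hpk1 : 1 < p ^ k := by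
    have : p ≤ p ^ k := Nat.le_self_pow hk p
    omega
  have hmb : m < b := by
    rcases Nat.lt_or_ge m b with h | h
    · exact h
    · exfalso; nlinarith [Nat.pos_of_ne_zero hm0]
  have htot : b.totient = (p ^ k).totient * m.totient := by
    rw [← hbm, Nat.totient_mul hcop]
  have IHm := IH m hmb hmodd
  constructor
  · calc b = p ^ k * m := hbm.symm
      _ ≤ (p ^ k).totient ^ 2 * m.totient ^ 2 :=
          Nat.mul_le_mul (pp_le hp hp2 hk) IHm.1
      _ = b.totient ^ 2 := by rw [htot]; ring
  · intro _ hb3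
    rcases eq_or_ne m 1 with hm1 | hm1
    · -- b = p ^ k
      have hbpk : b = p ^ k := by rw [← hbm, hm1, mul_one]
      have h3 : p ^ k ≠ 3 := by rw [← hbpk]; exact hb3
      calc 2 * b = 2 * p ^ k := by rw [hbpk]
        _ ≤ (p ^ k).totient ^ 2 := pp_le' hp hp2 hk h3
        _ = b.totient ^ 2 := by rw [hbpk]
    · have hm3 : m ≠ 3 := by
        intro hme
        rw [hme] at hcop hmdvd
        have h3p : p ≤ 3 := Nat.minFac_le_of_dvd (by norm_num) hmdvd
        have h33 : p = 3 := by omega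
        rw [h33] at hcop
        have h31 : (3:ℕ) ∣ 1 := hcop ▸ Nat.dvd_gcd (dvd_pow_self 3 hk) dvd_rfl
        norm_num at h31
      calc 2 * b = p ^ k * (2 * m) := by rw [← hbm]; ring
        _ ≤ (p ^ k).totient ^ 2 * m.totient ^ 2 :=
          Nat.mul_le_mul (pp_le hp hp2 hk) (IHm.2 hm1 hm3)
        _ = b.totient ^ 2 := by rw [htot]; ring

private lemma le_totient_sq_add_two (n : ℕ) : n ≤ n.totient ^ 2 + 2 := by
  rcases eq_or_ne n 0 with rfl | hn0
  · simp
  set a := n.factorization 2 with ha_def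
  set b := n / 2 ^ a with hb_def
  have hab : 2 ^ a * b = n := Nat.ordProj_mul_ordCompl_eq_self n 2
  have hcop : Nat.Coprime (2 ^ a) b := (Nat.coprime_ordCompl Nat.prime_two hn0).pow_left _
  have hbodd : Odd b := by
    rw [Nat.odd_iff]
    rcases Nat.even_or_odd b with h | h
    · exfalso
      exact Nat.not_dvd_ordCompl Nat.prime_two hn0 h.two_dvd
    · exact Nat.odd_iff.mp h
  have hb0 : b ≠ 0 := by intro h; rw [h, mul_zero] at hab; exact hn0 hab.symm
  have htot : n.totient = (2 ^ a).totient * b.totient := by rw [← hab, Nat.totient_mul hcop]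
  have hob := odd_totient_sq b hbodd
  match a, ha_def with
  | 0, _ =>
    have hnb : n = b := by omega
    calc n = b := hnb
      _ ≤ b.totient ^ 2 := hob.1
      _ ≤ n.totient ^ 2 + 2 := by rw [hnb]; omega
  | 1, _ =>
    have hnb : n = 2 * b := by rw [← hab]; norm_num
    have htot1 : n.totient = b.totient := by rw [htot]; norm_num
    rcases eq_or_ne b 1 with h1 | h1
    · rw [hnb, h1]; decide
    rcases eq_or_ne b 3 with h3 | h3
    · rw [hnb, h3]; decide
    · calc n = 2 * b := hnb
        _ ≤ b.totient ^ 2 := hob.2 h1 h3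
        _ ≤ n.totient ^ 2 + 2 := by rw [htot1]; omega
  | (j+2), _ =>
    have h2t : (2 ^ (j+2)).totient = 2 ^ (j+1) := by
      rw [Nat.totient_prime_pow Nat.prime_two (by omega)]
      norm_num
    calc n = 2 ^ (j+2) * b := hab.symm
      _ ≤ (2 ^ (j+1)) ^ 2 * b.totient ^ 2 := by
          apply Nat.mul_le_mul _ hob.1
          rw [← pow_mul]
          exact Nat.pow_le_pow_right (by norm_num) (by omega)
      _ = ((2 ^ (j+2)).totient * b.totient) ^ 2 := by rw [h2t]; ring
      _ ≤ n.totient ^ 2 + 2 := by rw [htot]; omega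

private lemma GL_center_iff {K : Type*} [Field K] {g : GL (Fin 2) K} :
    g ∈ Subgroup.center (GL (Fin 2) K) ↔
      ∃ c : K, (g : Matrix (Fin 2) (Fin 2) K) = c • 1 := by
  constructor
  · intro h
    have hcomm := Subgroup.mem_center_iff.mp h
    have hrange : (g : Matrix (Fin 2) (Fin 2) K) ∈ Set.range (Matrix.scalar (Fin 2)) := by
      apply Matrix.mem_range_scalar_of_commute_transvectionStruct
      intro t
      have hdet : t.toMatrix.det ≠ 0 := by rw [t.det]; norm_num
      have := congrArg Units.val (hcomm (Matrix.GeneralLinearGroup.mkOfDetNeZero t.toMatrix hdet))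
      simpa [Commute, SemiconjBy, Matrix.GeneralLinearGroup.mkOfDetNeZero] using this
    obtain ⟨c, hc⟩ := hrange
    exact ⟨c, by rw [← hc]; simp [Matrix.scalar_apply, Matrix.smul_one_eq_diagonal]⟩
  · rintro ⟨c, hc⟩
    apply Subgroup.mem_center_iff.mpr
    intro b
    refine Units.ext ?_
    rw [Units.val_mul, Units.val_mul, hc, mul_smul_comm, smul_mul_assoc, mul_one, one_mul]

private lemma nil_pow {L : Type*} [Field L] (N : Matrix (Fin 2) (Fin 2) L) (hN : N * N = 0)
    (lam : L) : ∀ j : ℕ, (lam • (1 : Matrix (Fin 2) (Fin 2) L) + N) ^ (j + 1)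
      = lam ^ (j + 1) • 1 + (((j : L) + 1) * lam ^ j) • N := by
  intro j
  induction j with
  | zero => simp
  | succ i ih =>
    rw [pow_succ, ih]
    simp only [add_mul, mul_add, smul_mul_assoc, mul_smul_comm, one_mul, mul_one, hN, smul_zero]
    match_scalars <;> push_cast <;> ring

private lemma map_scalar_descend {K L : Type*} [Field K] [Field L] (f : K →+* L)
    (A : Matrix (Fin 2) (Fin 2) K) (a : L) (h : A.map f = a • 1) : ∃ b : K, A = b • 1 := by
  refine ⟨A 0 0, ?_⟩
  have hinj := f.injective
  have he : ∀ i j, f (A i j) = a * (1 : Matrix (Fin 2) (Fin 2) L) i j := by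
    intro i j
    have := congrFun (congrFun h i) j
    simpa [Matrix.map_apply, Matrix.smul_apply] using this
  have h00 := he 0 0
  have h01 := he 0 1
  have h10 := he 1 0
  have h11 := he 1 1
  simp [Matrix.one_apply] at h00 h01 h10 h11
  ext i j
  fin_cases i <;> fin_cases j <;>
    simp [Matrix.smul_apply, Matrix.one_apply]
  · exact hinj (by rw [h01, map_zero])
  · exact hinj (by rw [h10, map_zero])
  · exact hinj (by rw [h11, ← h00])

set_option maxHeartbeats 2000000 in
/-- Let `K` be a number field of degree `d` over `ℚ`. Every element of finite order in
`PGL₂(K) = GL₂(K)/Z(GL₂(K))` has order at most `2 + 4d²`. -/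
theorem pgl2_order_bound (K : Type*) [Field K] [NumberField K]
    (x : Matrix.GeneralLinearGroup (Fin 2) K ⧸
      Subgroup.center (Matrix.GeneralLinearGroup (Fin 2) K))
    (hx : IsOfFinOrder x) :
    orderOf x ≤ 2 + 4 * (Module.finrank ℚ K) ^ 2 := by
  classical
  obtain ⟨g, rfl⟩ := QuotientGroup.mk_surjective x
  set d := Module.finrank ℚ K with hd
  set n := orderOf (QuotientGroup.mk (s := Subgroup.center (Matrix.GeneralLinearGroup (Fin 2) K)) g) with hn
  have hn0 : n ≠ 0 := hx.orderOf_pos.ne'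
  -- g ^ n is central, hence scalar
  have hgn : g ^ n ∈ Subgroup.center (Matrix.GeneralLinearGroup (Fin 2) K) := by
    rw [← QuotientGroup.eq_one_iff]
    rw [← QuotientGroup.mk'_apply, map_pow]
    exact pow_orderOf_eq_one _
  obtain ⟨c, hc⟩ := GL_center_iff.mp hgn
  have hc0 : c ≠ 0 := by
    intro h
    have hu : IsUnit ((g ^ n : GL (Fin 2) K) : Matrix (Fin 2) (Fin 2) K).det :=
      Matrix.isUnits_det_units _
    rw [hc, h] at hu
    simp at hu
  -- move to the algebraic closure
  set Kb := AlgebraicClosure K with hKb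
  set φ : K →+* Kb := algebraMap K Kb with hφ
  have hφinj : Function.Injective φ := φ.injective
  set A : Matrix (Fin 2) (Fin 2) K := (g : Matrix (Fin 2) (Fin 2) K) with hA
  set M : Matrix (Fin 2) (Fin 2) Kb := φ.mapMatrix A with hM
  have hmapsmul : ∀ (b : K), φ.mapMatrix (b • (1 : Matrix (Fin 2) (Fin 2) K)) = φ b • 1 := by
    intro b
    ext i j
    by_cases hij : i = j <;>
      simp [RingHom.mapMatrix_apply, Matrix.map_apply, Matrix.smul_apply, Matrix.one_apply, hij]
  have hMn : M ^ n = φ c • 1 := by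
    rw [hM, ← map_pow]
    have : A ^ n = c • 1 := by
      rw [hA, ← Units.val_pow_eq_pow_val, hc]
    rw [this, hmapsmul]
  have hφc0 : φ c ≠ 0 := fun h => hc0 (hφinj (by rw [h, map_zero]))
  -- the characteristic polynomial and its roots
  set tK : K := A 0 0 + A 1 1 with htK
  set eK : K := A 0 0 * A 1 1 - A 0 1 * A 1 0 with heK
  set pK : K[X] := X ^ 2 + C (-tK) * X + C eK with hpK
  have hpKmonic : pK.Monic := by rw [hpK]; monicity!
  have hpKdeg : pK.natDegree = 2 := by rw [hpK]; compute_degree!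
  obtain ⟨lam, hlam⟩ : ∃ lam : Kb, ((pK.map φ).IsRoot lam) := by
    apply IsAlgClosed.exists_root
    have : (pK.map φ).natDegree = 2 := by rw [natDegree_map_eq_of_injective hφinj, hpKdeg]
    intro hdeg0
    rw [degree_eq_natDegree (fun hz => by simp [hz] at this), this] at hdeg0
    exact (by norm_num : (2 : WithBot ℕ) ≠ 0) hdeg0
  set t : Kb := φ tK with ht
  set e : Kb := φ eK with he
  set mu : Kb := t - lam with hmu
  have hquad : lam ^ 2 - t * lam + e = 0 := by
    have h0 := hlam.eq_zero
    rw [hpK] at h0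
    simp only [Polynomial.map_add, Polynomial.map_mul, Polynomial.map_pow, Polynomial.map_X,
      Polynomial.map_C, Polynomial.map_neg, eval_add, eval_mul, eval_pow, eval_X, eval_C,
      map_neg, eval_neg] at h0
    linear_combination h0
  have hsum : lam + mu = t := by rw [hmu]; ring
  have hprod : lam * mu = e := by rw [hmu]; linear_combination -hquad
  -- express t and e through entries of M
  have hent : ∀ i j, M i j = φ (A i j) := by
    intro i j; rw [hM]; rfl
  have ht' : lam + mu = M 0 0 + M 1 1 := by
    rw [hsum, ht, htK, map_add, hent 0 0, hent 1 1]
  have he' : lam * mu = M 0 0 * M 1 1 - M 0 1 * M 1 0 := by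
    rw [hprod, he, heK, map_sub, map_mul, map_mul, hent 0 0, hent 1 1, hent 0 1, hent 1 0]
  -- Cayley–Hamilton, factored form
  have hCH : (M - lam • 1) * (M - mu • 1) = 0 := by
    ext i j
    fin_cases i <;> fin_cases j <;>
      simp only [Matrix.mul_apply, Fin.sum_univ_two, Matrix.sub_apply, Matrix.smul_apply,
        Matrix.one_apply, Matrix.zero_apply, if_true, if_false] <;>
      simp only [Fin.zero_eta, Fin.mk_one, ite_true, ite_false, one_ne_zero, zero_ne_one,
        smul_eq_mul, mul_one, mul_zero, sub_zero, reduceIte]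
    · linear_combination (- M 0 0) * ht' + he'
    · linear_combination (- M 0 1) * ht'
    · linear_combination (- M 1 0) * ht'
    · linear_combination (- M 1 1) * ht' + he'
  have hdet : ∀ r : Kb, r ^ 2 - t * r + e = 0 → (M - r • 1).det = 0 := by
    intro r hr
    rw [Matrix.det_fin_two]
    simp only [Matrix.sub_apply, Matrix.smul_apply, Matrix.one_apply, if_true, if_false,
      smul_eq_mul, mul_one, mul_zero, sub_zero, Fin.zero_eta, Fin.mk_one, ite_true, ite_false,
      one_ne_zero, zero_ne_one, reduceIte]
    linear_combination hr - r * hsum + r * ht' + hprod - he'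
  have hdetlam : (M - lam • 1).det = 0 := hdet lam hquad
  have hdetmu : (M - mu • 1).det = 0 := by
    apply hdet
    rw [hmu]; linear_combination hquad
  -- each eigenvalue to the n-th power equals φ c
  have haevalsub : ∀ r : Kb, (aeval M) (X - C r) = M - r • 1 := by
    intro r
    rw [map_sub, aeval_X, aeval_C, Algebra.algebraMap_eq_smul_one]
  have hpow_eq : ∀ r : Kb, (M - r • 1).det = 0 → r ^ n = φ c := by
    intro r hr
    obtain ⟨q, hq⟩ : (X - C r) ∣ (X ^ n - C (r ^ n)) :=
      dvd_iff_isRoot.mpr (by simp)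
    have h2 := congrArg (aeval M) hq
    rw [map_sub, map_pow, aeval_X, aeval_C, map_mul, haevalsub, Algebra.algebraMap_eq_smul_one,
      hMn, ← sub_smul] at h2
    have h3 := congrArg Matrix.det h2
    rw [Matrix.det_mul, hr, zero_mul, Matrix.det_smul, Matrix.det_one, mul_one] at h3
    have h3' : (φ c - r ^ n) ^ 2 = 0 := by simpa using h3
    have h4 : (φ c - r ^ n) = 0 := pow_eq_zero_iff (by norm_num : (2:ℕ) ≠ 0) |>.mp h3'
    linear_combination -h4
  have hlamn : lam ^ n = φ c := hpow_eq lam hdetlam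
  have hmun : mu ^ n = φ c := hpow_eq mu hdetmu
  have hlam0 : lam ≠ 0 := fun h => hφc0 (by rw [← hlamn, h, zero_pow hn0])
  have hmu0 : mu ≠ 0 := fun h => hφc0 (by rw [← hmun, h, zero_pow hn0])
  -- key dichotomy
  by_cases hlm : lam = mu
  · -- M is scalar, so x = 1
    have hN2 : (M - lam • 1) * (M - lam • 1) = 0 := by
      rw [hlm] at hCH ⊢; exact hCH
    obtain ⟨j, hj⟩ : ∃ j, n = j + 1 := ⟨n - 1, by omega⟩
    have hMsplit : M = lam • 1 + (M - lam • 1) := by abel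
    have hpow := nil_pow (M - lam • 1) hN2 lam j
    rw [← hMsplit, ← hj] at hpow
    rw [hMn] at hpow
    have hcoef : ((j : Kb) + 1) * lam ^ j ≠ 0 := by
      apply mul_ne_zero
      · have h8 : ((j + 1 : ℕ) : Kb) ≠ 0 := Nat.cast_ne_zero.mpr (Nat.succ_ne_zero j)
        push_cast at h8
        exact h8
      · exact pow_ne_zero _ hlam0
    rw [← hlamn] at hpow
    have hNz : M - lam • 1 =  0 :=
      (smul_eq_zero.mp (left_eq_add.mp hpow)).resolve_left hcoef
    have hMs : M = lam • 1 := by rwa [sub_eq_zero] at hNz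
    obtain ⟨b, hb⟩ := map_scalar_descend φ A lam (by rw [← RingHom.mapMatrix_apply]; exact hMs)
    have hgc : g ∈ Subgroup.center (Matrix.GeneralLinearGroup (Fin 2) K) :=
      GL_center_iff.mpr ⟨b, hb⟩
    have hq1 : (QuotientGroup.mk (s := Subgroup.center (Matrix.GeneralLinearGroup (Fin 2) K)) g) = 1 :=
      QuotientGroup.eq_one_iff g |>.mpr hgc
    rw [hn, hq1, orderOf_one]
    exact le_trans one_le_two (Nat.le_add_right 2 _)
  · -- lam ≠ mu : n = orderOf ζ for ζ a root of unity of small degree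
    set z : Kb := lam / mu with hz
    have hzn : z ^ n = 1 := by
      rw [hz, div_pow, hlamn, hmun, div_self hφc0]
    have hzfin : IsOfFinOrder z :=
      isOfFinOrder_iff_pow_eq_one.mpr ⟨n, Nat.pos_of_ne_zero hn0, hzn⟩
    set m := orderOf z with hm
    have hmdvd : m ∣ n := orderOf_dvd_of_pow_eq_one hzn
    have hm0 : m ≠ 0 := hzfin.orderOf_pos.ne'
    have hzm : z ^ m = 1 := pow_orderOf_eq_one z
    have hlm_m : lam ^ m = mu ^ m := by
      rw [hz, div_pow, div_eq_one_iff_eq (pow_ne_zero _ hmu0)] at hzm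
      exact hzm
    have hcop : IsCoprime (X - C lam) (X - C mu) :=
      isCoprime_X_sub_C_of_isUnit_sub ((sub_ne_zero.mpr hlm).isUnit)
    have hd1 : (X - C lam) ∣ (X ^ m - C (lam ^ m)) := dvd_iff_isRoot.mpr (by simp)
    have hd2 : (X - C mu) ∣ (X ^ m - C (lam ^ m)) := dvd_iff_isRoot.mpr (by simp [hlm_m])
    obtain ⟨q, hq⟩ := hcop.mul_dvd hd1 hd2
    have h2 := congrArg (aeval M) hq
    rw [map_sub, map_pow, aeval_X, aeval_C, map_mul, map_mul, haevalsub, haevalsub, hCH,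
      zero_mul, Algebra.algebraMap_eq_smul_one] at h2
    have hMm : M ^ m = lam ^ m • 1 := sub_eq_zero.mp h2
    have hAm : (A ^ m).map φ = lam ^ m • 1 := by
      rw [← RingHom.mapMatrix_apply, map_pow]
      exact hMm
    obtain ⟨b, hb⟩ := map_scalar_descend φ (A ^ m) (lam ^ m) hAm
    have hgm : g ^ m ∈ Subgroup.center (Matrix.GeneralLinearGroup (Fin 2) K) :=
      GL_center_iff.mpr ⟨b, by rw [Units.val_pow_eq_pow_val]; exact hb⟩
    have hxm : (QuotientGroup.mk (s := Subgroup.center (Matrix.GeneralLinearGroup (Fin 2) K)) g) ^ m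
        = 1 := by
      rw [← QuotientGroup.mk'_apply, ← map_pow]
      exact (QuotientGroup.eq_one_iff _).mpr hgm
    have hnm : n ∣ m := hn ▸ orderOf_dvd_of_pow_eq_one hxm
    have hmn : m = n := Nat.dvd_antisymm hmdvd hnm
    have hprim : IsPrimitiveRoot z n := by rw [← hmn, hm]; exact IsPrimitiveRoot.orderOf z
    -- lam generates a field of degree at most 2 over K containing z
    have haev : (aeval lam) pK = 0 := by
      rw [aeval_def, ← eval_map]; exact hlam.eq_zero
    have hint : IsIntegral K lam := ⟨pK, hpKmonic, haev⟩
    haveI hFD : FiniteDimensional K K⟮lam⟯ := IntermediateField.adjoin.finiteDimensional hint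
    have hfr2 : Module.finrank K K⟮lam⟯ ≤ 2 := by
      rw [IntermediateField.adjoin.finrank hint]
      exact le_trans (natDegree_le_of_dvd (minpoly.dvd K lam haev) hpKmonic.ne_zero)
        (le_of_eq hpKdeg)
    have hzmem : z ∈ K⟮lam⟯ := by
      have hlmem : lam ∈ K⟮lam⟯ := IntermediateField.mem_adjoin_simple_self K lam
      have htmem : t ∈ K⟮lam⟯ := by rw [ht]; exact IntermediateField.algebraMap_mem _ tK
      have hmumem : mu ∈ K⟮lam⟯ := by rw [hmu]; exact sub_mem htmem hlmem
      rw [hz]; exact div_mem hlmem hmumem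
    set zF : K⟮lam⟯ := ⟨z, hzmem⟩ with hzF
    have hprimF : IsPrimitiveRoot zF n := by
      constructor
      · apply Subtype.ext
        rw [SubmonoidClass.coe_pow]
        exact hprim.pow_eq_one
      · intro l hl
        apply hprim.dvd_of_pow_eq_one
        have hl' := congrArg Subtype.val hl
        rw [SubmonoidClass.coe_pow] at hl'
        exact hl'
    haveI : CharZero K⟮lam⟯ := (algebraMap K⟮lam⟯ Kb).charZero
    have htotle : n.totient ≤ (minpoly ℤ zF).natDegree := hprimF.totient_le_degree_minpoly
    haveI : IsScalarTower ℤ ℚ K⟮lam⟯ := IsScalarTower.of_algebraMap_eq' (RingHom.ext_int _ _)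
    have hintz : IsIntegral ℤ zF :=
      ⟨X ^ n - C 1, monic_X_pow_sub_C (1 : ℤ) hn0, by
        simp [eval₂_sub, eval₂_pow, eval₂_X, eval₂_C, hprimF.pow_eq_one]⟩
    have heqmin : minpoly ℚ zF = (minpoly ℤ zF).map (algebraMap ℤ ℚ) :=
      minpoly.isIntegrallyClosed_eq_field_fractions' ℚ hintz
    haveI : FiniteDimensional ℚ K⟮lam⟯ := FiniteDimensional.trans ℚ K K⟮lam⟯
    have hfinal : n.totient ≤ d * 2 := by
      calc n.totient ≤ (minpoly ℤ zF).natDegree := htotle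
        _ = (minpoly ℚ zF).natDegree := by
            rw [heqmin, natDegree_map_eq_of_injective (algebraMap ℤ ℚ).injective_int]
        _ ≤ Module.finrank ℚ K⟮lam⟯ := minpoly.natDegree_le zF
        _ = d * Module.finrank K K⟮lam⟯ := (Module.finrank_mul_finrank ℚ K K⟮lam⟯).symm
        _ ≤ d * 2 := Nat.mul_le_mul_left d hfr2
    calc n ≤ n.totient ^ 2 + 2 := le_totient_sq_add_two n
      _ ≤ (d * 2) ^ 2 + 2 := by
          have := Nat.pow_le_pow_left hfinal 2
          omega
      _ = 2 + 4 * d ^ 2 := by ring
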